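/- arXiv:1801.03306 — 4 statements merged into one kernel-verified Lean document; each statement's English description precedes it below -/
import Mathlib

section
/- Let S₁, …, S_m be independent uniformly random elements of F_q, and define the random matrix Q ∈ F_q^{l×m} by Q_{i,j} := (S_j)^i for 1 ≤ i ≤ l, 1 ≤ j ≤ m, where l ≥ m. Then for any fixed row vectors x ∈ F_q^m and y ∈ F_q^l with y ≠ 0, the probability that x = yQ is at most (l/q)^m. -/
open scoped BigOperators

/-- Vandermonde probability bound, Claim 5 of Jaggi et al.:
for i.i.d. uniform `S₁,…,S_m ∈ F_q`, the random matrix `Q ∈ F_q^{l×m}` with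
`Q_{i,j} = (S_j)^i` (`1 ≤ i ≤ l`, `l ≥ m`) satisfies, for fixed row vectors `x ∈ F_q^m`
and `y ∈ F_q^l` with `y ≠ 0`, `Pr[x = yQ] ≤ (l/q)^m`. -/
theorem stmt6 (F : Type) [Field F] [Fintype F] (l m : ℕ) (hlm : m ≤ l)
    (x : Fin m → F) (y : Fin l → F) (hy : y ≠ 0) :
    (Nat.card {S : Fin m → F //
        ∀ j, x j = ∑ i : Fin l, y i * (S j) ^ ((i : ℕ) + 1)} : ℝ) /
      (Fintype.card F : ℝ) ^ m ≤ ((l : ℝ) / (Fintype.card F : ℝ)) ^ m := by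
  classical
  obtain ⟨i₀, hi₀⟩ : ∃ i, y i ≠ 0 := by
    by_contra h; push_neg at h; exact hy (funext h)
  -- per-coordinate bound
  have key : ∀ j : Fin m,
      Fintype.card {s : F // x j = ∑ i : Fin l, y i * s ^ ((i : ℕ) + 1)} ≤ l := by
    intro j
    set p : Polynomial F :=
      (∑ i : Fin l, Polynomial.C (y i) * Polynomial.X ^ ((i : ℕ) + 1)) - Polynomial.C (x j)
      with hp
    have hpne : p ≠ 0 := by
      intro h0
      have hc : p.coeff ((i₀ : ℕ) + 1) = 0 := by rw [h0]; simp
      apply hi₀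
      rw [hp] at hc
      simp only [Polynomial.coeff_sub, Polynomial.finset_sum_coeff,
        Polynomial.coeff_C_mul, Polynomial.coeff_X_pow, Polynomial.coeff_C] at hc
      rw [Finset.sum_eq_single i₀] at hc
      · simpa using hc
      · intro b _ hb
        have : ¬ ((i₀ : ℕ) + 1 = (b : ℕ) + 1) :=
          fun h => hb (Fin.val_inj.mp (by omega))
        simp [this]
        intro h; exact absurd (Fin.val_inj.mp h).symm hb
      · simp
    have hdeg : p.natDegree ≤ l := by
      refine le_trans (Polynomial.natDegree_sub_le _ _) ?_
      rw [max_le_iff]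
      constructor
      · refine Polynomial.natDegree_sum_le_of_forall_le _ _ ?_
        intro i _
        refine le_trans (Polynomial.natDegree_C_mul_le _ _) ?_
        simp [Nat.succ_le_of_lt i.isLt]
      · simp
    have hsub : (Finset.univ.filter
        (fun s : F => x j = ∑ i : Fin l, y i * s ^ ((i : ℕ) + 1))) ⊆ p.roots.toFinset := by
      intro s hs
      simp only [Finset.mem_filter, Finset.mem_univ, true_and] at hs
      rw [Multiset.mem_toFinset, Polynomial.mem_roots hpne]
      simp [Polynomial.IsRoot, hp, Polynomial.eval_finset_sum, ← hs]
    calc Fintype.card {s : F // x j = ∑ i : Fin l, y i * s ^ ((i : ℕ) + 1)}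
        = (Finset.univ.filter
            (fun s : F => x j = ∑ i : Fin l, y i * s ^ ((i : ℕ) + 1))).card := by
          rw [Fintype.card_subtype]
      _ ≤ p.roots.toFinset.card := Finset.card_le_card hsub
      _ ≤ Multiset.card p.roots := Multiset.toFinset_card_le _
      _ ≤ p.natDegree := Polynomial.card_roots' p
      _ ≤ l := hdeg
  have hcard : Nat.card {S : Fin m → F //
      ∀ j, x j = ∑ i : Fin l, y i * (S j) ^ ((i : ℕ) + 1)} ≤ l ^ m := by
    have e := Equiv.subtypePiEquivPi
      (p := fun (j : Fin m) (s : F) => x j = ∑ i : Fin l, y i * s ^ ((i : ℕ) + 1))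
    rw [Nat.card_eq_fintype_card, Fintype.card_congr e, Fintype.card_pi]
    calc ∏ j : Fin m, Fintype.card {s : F // x j = ∑ i : Fin l, y i * s ^ ((i : ℕ) + 1)}
        ≤ ∏ _j : Fin m, l := Finset.prod_le_prod (fun _ _ => Nat.zero_le _)
          (fun j _ => key j)
      _ = l ^ m := by simp
  have hq : (0 : ℝ) < (Fintype.card F : ℝ) := by
    exact_mod_cast Fintype.card_pos
  rw [div_pow]
  apply div_le_div_of_nonneg_right ?_ (by positivity)
  calc (Nat.card {S : Fin m → F //
      ∀ j, x j = ∑ i : Fin l, y i * (S j) ^ ((i : ℕ) + 1)} : ℝ)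
      ≤ ((l ^ m : ℕ) : ℝ) := by exact_mod_cast hcard
    _ = (l : ℝ) ^ m := by push_cast; ring
end

section
/- Let P₁ := Σ_{x∈F_q^m} |x,x⟩_b⟨x,x|_b and P₂ := Σ_{z∈F_q^m} |z,z̄⟩_p⟨z,z̄|_p be the projections onto the spans of the diagonal bit-basis states and the conjugate-diagonal phase-basis states, respectively, acting on (C^q)^{⊗m} ⊗ (C^q)^{⊗m}. Then P₁P₂ = P₂P₁ = |Φ⟩⟨Φ| where |Φ⟩ = (1/√(q^m)) Σ_{i∈F_q^m} |i,i⟩_b is the maximally entangled state. -/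
open scoped BigOperators Matrix
open Classical

/-- The trace bilinear pairing `(x, z) := Σᵢ tr(xᵢ zᵢ)` on `F_q^m`, valued in `{0,…,s-1}`. -/
noncomputable def pairTr (s : ℕ) (F : Type) [Field F] [Fintype F] [Algebra (ZMod s) F]
    (m : ℕ) (x z : Fin m → F) : ℕ :=
  (∑ i, Algebra.trace (ZMod s) F (x i * z i)).val

/-- The bit basis state `|x,x⟩_b` on the doubled system, as an amplitude function. -/
noncomputable def bitPairVec (F : Type) [Field F] [Fintype F] (m : ℕ) (x : Fin m → F) :
    ((Fin m → F) × (Fin m → F)) → ℂ :=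
  fun p => if p = (x, x) then 1 else 0

/-- The phase basis state `|z, z̄⟩_p` on the doubled system, as an amplitude function:
`(1/q^m) ω^{-(a,z)} ω^{+(b,z)}` at the bit label `(a, b)`. -/
noncomputable def phasePairVec (s : ℕ) (F : Type) [Field F] [Fintype F]
    [Algebra (ZMod s) F] (m : ℕ) (z : Fin m → F) :
    ((Fin m → F) × (Fin m → F)) → ℂ :=
  fun p => (1 / ((Fintype.card F : ℂ) ^ m)) *
    Complex.exp (-(2 * Real.pi * Complex.I / s) * (pairTr s F m p.1 z : ℕ)) *
    Complex.exp ((2 * Real.pi * Complex.I / s) * (pairTr s F m p.2 z : ℕ))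

/-- `P₁ = Σ_x |x,x⟩_b⟨x,x|_b`. -/
noncomputable def P₁ (F : Type) [Field F] [Fintype F] (m : ℕ) :
    Matrix ((Fin m → F) × (Fin m → F)) ((Fin m → F) × (Fin m → F)) ℂ :=
  ∑ x : Fin m → F, Matrix.vecMulVec (bitPairVec F m x) (star (bitPairVec F m x))

/-- `P₂ = Σ_z |z,z̄⟩_p⟨z,z̄|_p`. -/
noncomputable def P₂ (s : ℕ) (F : Type) [Field F] [Fintype F] [Algebra (ZMod s) F] (m : ℕ) :
    Matrix ((Fin m → F) × (Fin m → F)) ((Fin m → F) × (Fin m → F)) ℂ :=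
  ∑ z : Fin m → F,
    Matrix.vecMulVec (phasePairVec s F m z) (star (phasePairVec s F m z))

/-- The maximally entangled state `|Φ⟩ = (1/√(q^m)) Σ_i |i,i⟩_b`. -/
noncomputable def maxEnt (F : Type) [Field F] [Fintype F] (m : ℕ) :
    ((Fin m → F) × (Fin m → F)) → ℂ :=
  fun p => if p.1 = p.2 then ((1 / Real.sqrt ((Fintype.card F : ℝ) ^ m) : ℝ) : ℂ) else 0


section AuxStmt8
variable (s : ℕ) [Fact (Nat.Prime s)] (F : Type) [Field F] [Fintype F] [Algebra (ZMod s) F]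

lemma stmt8_zeta_pow : Complex.exp (2 * Real.pi * Complex.I / s) ^ s = 1 := by
  have hs : (s : ℂ) ≠ 0 := Nat.cast_ne_zero.mpr (Fact.out (p := Nat.Prime s)).ne_zero
  rw [← Complex.exp_nat_mul]
  rw [show (s : ℂ) * (2 * Real.pi * Complex.I / s) = 2 * Real.pi * Complex.I by field_simp]
  exact Complex.exp_two_pi_mul_I

/-- The standard additive character of `ZMod s` in `ℂ`. -/
noncomputable def stmt8Chi : AddChar (ZMod s) ℂ := AddChar.zmodChar s (stmt8_zeta_pow s)

lemma stmt8Chi_apply (u : ZMod s) :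
    stmt8Chi s u = Complex.exp ((2 * Real.pi * Complex.I / s) * (u.val : ℕ)) := by
  rw [stmt8Chi, AddChar.zmodChar_apply, ← Complex.exp_nat_mul, mul_comm]

lemma stmt8Chi_ne_one : stmt8Chi s (1 : ZMod s) ≠ 1 := by
  have hs := (Fact.out (p := Nat.Prime s)).two_le
  have hprim : IsPrimitiveRoot (Complex.exp (2 * Real.pi * Complex.I / s)) s :=
    Complex.isPrimitiveRoot_exp s (by omega)
  have h1 : (1 : ZMod s).val = 1 := ZMod.val_one_eq_one_mod s ▸ Nat.mod_eq_of_lt (by omega)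
  rw [stmt8Chi, AddChar.zmodChar_apply, h1, pow_one]
  intro h
  exact hprim.pow_ne_one_of_pos_of_lt (l := 1) one_ne_zero (by omega) (by simpa using h)

/-- The trace pairing, valued in `ZMod s`. -/
noncomputable def stmt8Tp (m : ℕ) (x z : Fin m → F) : ZMod s :=
  ∑ i, Algebra.trace (ZMod s) F (x i * z i)

set_option linter.unusedSectionVars false

lemma stmt8Tp_sub_left (m : ℕ) (a b z : Fin m → F) :
    stmt8Tp s F m (a - b) z = stmt8Tp s F m a z - stmt8Tp s F m b z := by
  simp [stmt8Tp, sub_mul, map_sub, Finset.sum_sub_distrib]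

/-- `stmt8Tp w ·` as an additive hom. -/
noncomputable def stmt8TpHom (m : ℕ) (w : Fin m → F) : (Fin m → F) →+ ZMod s where
  toFun z := stmt8Tp s F m w z
  map_zero' := by simp [stmt8Tp]
  map_add' a b := by simp [stmt8Tp, mul_add, map_add, Finset.sum_add_distrib]

lemma stmt8_sum_chi (m : ℕ) (w : Fin m → F) :
    ∑ z : Fin m → F, stmt8Chi s (stmt8Tp s F m w z)
      = if w = 0 then ((Fintype.card F : ℂ) ^ m) else 0 := by
  classical
  have : FiniteDimensional (ZMod s) F :=
    Module.Finite.of_basis (Module.Free.chooseBasis (ZMod s) F)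
  set ψ : AddChar (Fin m → F) ℂ := (stmt8Chi s).compAddMonoidHom (stmt8TpHom s F m w) with hψ
  have key : ψ = 0 ↔ w = 0 := by
    constructor
    · intro h0
      by_contra hw
      obtain ⟨i, hi⟩ : ∃ i, w i ≠ 0 := by
        by_contra hc; push_neg at hc; exact hw (funext hc)
      obtain ⟨y, hy⟩ := Algebra.trace_surjective (ZMod s) F 1
      set z : Fin m → F := Pi.single i (y / w i) with hz
      have hT : stmt8Tp s F m w z = 1 := by
        rw [stmt8Tp, Finset.sum_eq_single i]
        · rw [hz, Pi.single_eq_same, mul_div_cancel₀ _ hi, hy]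
        · intro j _ hj; rw [hz, Pi.single_eq_of_ne hj, mul_zero, map_zero]
        · intro hc; exact absurd (Finset.mem_univ i) hc
      have h2 : ψ z = 1 := by rw [h0, AddChar.zero_apply]
      exact stmt8Chi_ne_one s (by rwa [hψ, AddChar.compAddMonoidHom_apply,
        show stmt8TpHom s F m w z = stmt8Tp s F m w z from rfl, hT] at h2)
    · intro h0
      subst h0
      apply AddChar.eq_zero_iff.mpr
      intro z
      rw [hψ, AddChar.compAddMonoidHom_apply,
        show stmt8TpHom s F m 0 z = stmt8Tp s F m 0 z from rfl]
      simp [stmt8Tp, AddChar.map_zero_eq_one]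
  have hsum : ∑ z : Fin m → F, stmt8Chi s (stmt8Tp s F m w z) = ∑ z, ψ z := rfl
  rw [hsum, AddChar.sum_eq_ite]
  simp only [key, Fintype.card_fun, Fintype.card_fin, Nat.cast_pow]

lemma stmt8_star_chi (u : ZMod s) : star (stmt8Chi s u) = (stmt8Chi s u)⁻¹ := by
  rw [stmt8Chi_apply, Complex.star_def, ← Complex.exp_conj, ← Complex.exp_neg]
  congr 1
  simp only [map_mul, map_div₀, Complex.conj_I, Complex.conj_natCast, Complex.conj_ofReal,
    map_ofNat]
  ring

lemma stmt8_phase_eq (m : ℕ) (z : Fin m → F) (p : (Fin m → F) × (Fin m → F)) :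
    phasePairVec s F m z p
      = (1 / ((Fintype.card F : ℂ) ^ m)) * stmt8Chi s (stmt8Tp s F m (p.2 - p.1) z) := by
  have e1 : ∀ x : Fin m → F,
      Complex.exp ((2 * Real.pi * Complex.I / s) * (pairTr s F m x z : ℕ))
        = stmt8Chi s (stmt8Tp s F m x z) := fun x => (stmt8Chi_apply s _).symm
  rw [phasePairVec, stmt8Tp_sub_left, AddChar.map_sub_eq_div, div_eq_mul_inv, neg_mul,
    Complex.exp_neg, e1, e1]
  ring

lemma stmt8_star_phase (m : ℕ) (z : Fin m → F) (q : (Fin m → F) × (Fin m → F)) :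
    star (phasePairVec s F m z) q
      = (1 / ((Fintype.card F : ℂ) ^ m)) * (stmt8Chi s (stmt8Tp s F m (q.2 - q.1) z))⁻¹ := by
  rw [Pi.star_apply, stmt8_phase_eq, star_mul', stmt8_star_chi]
  congr 1
  simp

lemma stmt8_P1_apply (m : ℕ) (p r : (Fin m → F) × (Fin m → F)) :
    P₁ F m p r = if p.1 = p.2 ∧ r = p then 1 else 0 := by
  rw [P₁, Matrix.sum_apply]
  have h : ∀ x : Fin m → F,
      Matrix.vecMulVec (bitPairVec F m x) (star (bitPairVec F m x)) p r
        = if x = p.1 then (if p.1 = p.2 ∧ r = p then (1:ℂ) else 0) else 0 := by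
    intro x
    rw [Matrix.vecMulVec_apply, Pi.star_apply, bitPairVec, bitPairVec]
    rcases p with ⟨p1, p2⟩
    rcases r with ⟨r1, r2⟩
    simp only [Prod.mk.injEq]
    split_ifs <;> simp_all
  rw [Finset.sum_congr rfl (fun x _ => h x), Finset.sum_ite_eq' Finset.univ p.1,
    if_pos (Finset.mem_univ _)]

lemma stmt8_P2_apply (m : ℕ) (p q : (Fin m → F) × (Fin m → F)) :
    P₂ s F m p q
      = if p.2 - p.1 = q.2 - q.1 then 1 / ((Fintype.card F : ℂ) ^ m) else 0 := by
  have hQ : ((Fintype.card F : ℂ) ^ m) ≠ 0 :=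
    pow_ne_zero _ (Nat.cast_ne_zero.mpr Fintype.card_ne_zero)
  rw [P₂, Matrix.sum_apply]
  have h : ∀ z : Fin m → F,
      Matrix.vecMulVec (phasePairVec s F m z) (star (phasePairVec s F m z)) p q
        = (1 / ((Fintype.card F : ℂ) ^ m)) ^ 2
            * stmt8Chi s (stmt8Tp s F m ((p.2 - p.1) - (q.2 - q.1)) z) := by
    intro z
    have hx : stmt8Chi s (stmt8Tp s F m ((p.2 - p.1) - (q.2 - q.1)) z)
        = stmt8Chi s (stmt8Tp s F m (p.2 - p.1) z)
            * (stmt8Chi s (stmt8Tp s F m (q.2 - q.1) z))⁻¹ := by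
      rw [stmt8Tp_sub_left s F m (p.2 - p.1) (q.2 - q.1) z, AddChar.map_sub_eq_div,
        div_eq_mul_inv]
    rw [Matrix.vecMulVec_apply, stmt8_phase_eq, stmt8_star_phase, hx]
    ring
  rw [Finset.sum_congr rfl (fun z _ => h z), ← Finset.mul_sum, stmt8_sum_chi]
  simp only [sub_eq_zero]
  split_ifs
  · rw [sq]
    field_simp
  · rw [mul_zero]

lemma stmt8_maxEnt_outer (m : ℕ) (p q : (Fin m → F) × (Fin m → F)) :
    Matrix.vecMulVec (maxEnt F m) (star (maxEnt F m)) p q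
      = if p.1 = p.2 ∧ q.1 = q.2 then 1 / ((Fintype.card F : ℂ) ^ m) else 0 := by
  have hpos : (0:ℝ) < (Fintype.card F : ℝ) ^ m :=
    pow_pos (by exact_mod_cast Fintype.card_pos) m
  rw [Matrix.vecMulVec_apply, Pi.star_apply, maxEnt, maxEnt]
  by_cases h1 : p.1 = p.2 <;> by_cases h2 : q.1 = q.2 <;>
    simp only [h1, h2, if_true, if_false, mul_zero, zero_mul, star_zero, if_pos, and_true,
      and_false, if_neg, not_false_iff]
  rw [Complex.star_def, Complex.conj_ofReal, ← Complex.ofReal_mul]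
  rw [show (1 / Real.sqrt ((Fintype.card F : ℝ) ^ m)) * (1 / Real.sqrt ((Fintype.card F : ℝ) ^ m))
      = 1 / ((Fintype.card F : ℝ) ^ m) by
    rw [div_mul_div_comm, one_mul, Real.mul_self_sqrt hpos.le]]
  push_cast
  ring

end AuxStmt8

/-- `P₁ P₂ = P₂ P₁ = |Φ⟩⟨Φ|`. -/
theorem stmt8 (s : ℕ) [Fact (Nat.Prime s)] (F : Type) [Field F] [Fintype F]
    [Algebra (ZMod s) F] (hcard : ∃ t : ℕ, 0 < t ∧ Fintype.card F = s ^ t) (m : ℕ) :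
    P₁ F m * P₂ s F m = Matrix.vecMulVec (maxEnt F m) (star (maxEnt F m)) ∧
    P₂ s F m * P₁ F m = Matrix.vecMulVec (maxEnt F m) (star (maxEnt F m)) := by
  refine ⟨?_, ?_⟩
  · ext p q
    rw [Matrix.mul_apply, stmt8_maxEnt_outer]
    have h : ∀ r : (Fin m → F) × (Fin m → F),
        P₁ F m p r * P₂ s F m r q
          = if r = p then (if p.1 = p.2 ∧ q.1 = q.2
              then 1 / ((Fintype.card F : ℂ) ^ m) else 0) else 0 := by
      intro r
      rw [stmt8_P1_apply, stmt8_P2_apply]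
      by_cases hr : r = p
      · subst hr
        by_cases h1 : r.1 = r.2
        · rw [if_pos ⟨h1, rfl⟩, one_mul, if_pos rfl]
          by_cases h2 : q.1 = q.2
          · rw [if_pos (by rw [h1, h2, sub_self, sub_self]), if_pos ⟨h1, h2⟩]
          · rw [if_neg (fun hc => h2 (by
              rw [h1, sub_self] at hc
              exact (sub_eq_zero.mp hc.symm).symm)), if_neg (by tauto)]
        · rw [if_neg (by tauto), zero_mul, if_pos rfl, if_neg (by tauto)]
      · rw [if_neg (fun hc => hr hc.2), zero_mul, if_neg hr]
    rw [Finset.sum_congr rfl (fun r _ => h r), Finset.sum_ite_eq' Finset.univ p,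
      if_pos (Finset.mem_univ _)]
  · ext p q
    rw [Matrix.mul_apply, stmt8_maxEnt_outer]
    have h : ∀ r : (Fin m → F) × (Fin m → F),
        P₂ s F m p r * P₁ F m r q
          = if r = q then (if p.1 = p.2 ∧ q.1 = q.2
              then 1 / ((Fintype.card F : ℂ) ^ m) else 0) else 0 := by
      intro r
      rw [stmt8_P2_apply, stmt8_P1_apply]
      by_cases hr : r = q
      · subst hr
        by_cases h2 : r.1 = r.2
        · rw [if_pos (show r.1 = r.2 ∧ r = r from ⟨h2, rfl⟩), mul_one, if_pos rfl]
          by_cases h1 : p.1 = p.2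
          · rw [if_pos (show p.2 - p.1 = r.2 - r.1 by rw [h1, h2, sub_self, sub_self]),
              if_pos (show p.1 = p.2 ∧ r.1 = r.2 from ⟨h1, h2⟩)]
          · rw [if_neg (show ¬(p.2 - p.1 = r.2 - r.1) from fun hc => h1 (by
              rw [h2, sub_self] at hc
              exact (sub_eq_zero.mp hc).symm)),
              if_neg (show ¬(p.1 = p.2 ∧ r.1 = r.2) by tauto)]
        · rw [if_neg (show ¬(r.1 = r.2 ∧ r = r) by tauto), mul_zero, if_pos rfl,
            if_neg (show ¬(p.1 = p.2 ∧ r.1 = r.2) by tauto)]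
      · rw [if_neg (show ¬(r.1 = r.2 ∧ q = r) from fun hc => hr hc.2.symm), mul_zero,
          if_neg hr]
    rw [Finset.sum_congr rfl (fun r _ => h r), Finset.sum_ite_eq' Finset.univ q,
      if_pos (Finset.mem_univ _)]
end

section
/- Let Λ be a quantum channel (TP-CP map) on a d-dimensional system H_code, ρ_mix the completely mixed state, |Φ⟩ the maximally entangled state of H_code with a reference system R, P₁ := Σ_x |x,x⟩_b⟨x,x| and P₂ := Σ_z |z,z̄⟩_p⟨z,z̄| the bit and phase diagonal projections. Then 1 − ⟨Φ| Λ⊗ι_R(|Φ⟩⟨Φ|) |Φ⟩ ≤ Tr[Λ⊗ι_R(|Φ⟩⟨Φ|)(I − P₁)] + Tr[Λ⊗ι_R(|Φ⟩⟨Φ|)(I − P₂)]. -/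
open scoped BigOperators Matrix Kronecker
open Classical

noncomputable def zeta (s : ℕ) : ℂ := Complex.exp (2 * Real.pi * Complex.I / s)

lemma zeta_pow_card (s : ℕ) (hs : s ≠ 0) : zeta s ^ s = 1 := by
  rw [zeta, ← Complex.exp_nat_mul]
  have hs' : (s : ℂ) ≠ 0 := Nat.cast_ne_zero.mpr hs
  rw [mul_div_assoc', mul_comm, mul_div_assoc, div_self hs', mul_one]
  simpa [mul_comm] using Complex.exp_two_pi_mul_I

lemma zeta_ne_one (s : ℕ) (hs : 1 < s) : zeta s ≠ 1 := by
  intro h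
  rw [zeta, Complex.exp_eq_one_iff] at h
  obtain ⟨n, hn⟩ := h
  have hs0 : (s : ℂ) ≠ 0 := by
    exact_mod_cast (Nat.zero_lt_of_lt hs).ne'
  have h2 : (2 * Real.pi * Complex.I) ≠ 0 := by
    simp [Real.pi_ne_zero, Complex.I_ne_zero]
  have hns : ((n * s : ℤ) : ℂ) = 1 := by
    push_cast
    field_simp at hn
    have h3 : (2 * (Real.pi:ℂ) * Complex.I) * ((n:ℂ) * s) = (2 * (Real.pi:ℂ) * Complex.I) * 1 := by
      linear_combination -(2 * (Real.pi:ℂ) * Complex.I) * hn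
    have := mul_left_cancel₀ h2 h3
    linear_combination this
  have hns' : (n * s : ℤ) = 1 := by exact_mod_cast hns
  have : (s : ℤ) ∣ 1 := Dvd.intro_left n hns'
  have := Int.le_of_dvd one_pos this
  omega

lemma zeta_pow_mod (s : ℕ) (hs : s ≠ 0) (n : ℕ) : zeta s ^ (n % s) = zeta s ^ n := by
  conv_rhs => rw [← Nat.div_add_mod n s]
  rw [pow_add, pow_mul, zeta_pow_card s hs, one_pow, one_mul]

section EE
variable (s : ℕ) [Fact (Nat.Prime s)]

noncomputable def ee (a : ZMod s) : ℂ := zeta s ^ a.val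

lemma s_ne_zero : s ≠ 0 := (Fact.out (p := Nat.Prime s)).pos.ne'

lemma ee_zero : ee s 0 = 1 := by
  haveI : NeZero s := ⟨s_ne_zero s⟩
  simp [ee, ZMod.val_zero]

lemma ee_add (a b : ZMod s) : ee s (a + b) = ee s a * ee s b := by
  haveI : NeZero s := ⟨s_ne_zero s⟩
  rw [ee, ee, ee, ZMod.val_add, zeta_pow_mod s (s_ne_zero s), pow_add]

lemma ee_ne_zero (a : ZMod s) : ee s a ≠ 0 := by
  rw [ee, zeta]
  exact pow_ne_zero _ (Complex.exp_ne_zero _)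

lemma ee_neg (a : ZMod s) : ee s (-a) = (ee s a)⁻¹ := by
  have h : ee s (-a) * ee s a = 1 := by rw [← ee_add]; simp [ee_zero]
  field_simp [ee_ne_zero] at h ⊢
  linear_combination h

lemma ee_sum {ι : Type*} (t : Finset ι) (f : ι → ZMod s) :
    ee s (∑ i ∈ t, f i) = ∏ i ∈ t, ee s (f i) := by
  classical
  induction t using Finset.cons_induction with
  | empty => simp [ee_zero]
  | cons i t hi ih => rw [Finset.sum_cons, Finset.prod_cons, ee_add, ih]

lemma exp_val (a : ZMod s) :
    Complex.exp ((2 * Real.pi * Complex.I / s) * (a.val : ℕ)) = ee s a := by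
  rw [ee, zeta, ← Complex.exp_nat_mul, mul_comm]

lemma exp_neg_val (a : ZMod s) :
    Complex.exp (-(2 * Real.pi * Complex.I / s) * (a.val : ℕ)) = ee s (-a) := by
  have h : Complex.exp (-(2 * Real.pi * Complex.I / s) * (a.val : ℕ)) *
      Complex.exp ((2 * Real.pi * Complex.I / s) * (a.val : ℕ)) = 1 := by
    rw [← Complex.exp_add]; ring_nf; exact Complex.exp_zero
  rw [exp_val] at h
  rw [ee_neg]
  field_simp [ee_ne_zero] at h ⊢
  linear_combination h

lemma conj_zeta : (starRingEnd ℂ) (zeta s) = Complex.exp (-(2 * Real.pi * Complex.I / s)) := by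
  rw [zeta, ← Complex.exp_conj]
  congr 1
  simp [map_div₀, Complex.conj_I, map_ofNat]
  ring

lemma conj_ee (a : ZMod s) : (starRingEnd ℂ) (ee s a) = ee s (-a) := by
  rw [ee, map_pow, conj_zeta, ← Complex.exp_nat_mul, ← exp_neg_val s a]
  congr 1
  ring

end EE

section CharSum
variable (s : ℕ) [Fact (Nat.Prime s)] (F : Type) [Field F] [Fintype F] [Algebra (ZMod s) F]

lemma exists_trace_one : ∃ t : F, Algebra.trace (ZMod s) F t = 1 := by
  haveI : Module.Finite (ZMod s) F := Module.Finite.of_finite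
  have h := Algebra.trace_ne_zero (ZMod s) F
  have : ∃ u : F, Algebra.trace (ZMod s) F u ≠ 0 := by
    by_contra hc
    push_neg at hc
    exact h (LinearMap.ext fun u => hc u)
  obtain ⟨u, hu⟩ := this
  refine ⟨(Algebra.trace (ZMod s) F u)⁻¹ • u, ?_⟩
  rw [map_smul, smul_eq_mul, inv_mul_cancel₀ hu]

lemma sum_char_zero_ne (c : F) (hc : c ≠ 0) :
    ∑ w : F, ee s (Algebra.trace (ZMod s) F (c * w)) = 0 := by
  -- reduce to c = 1 by reindexing w ↦ c⁻¹ * w is not needed; reindex w ↦ c * w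
  have key : ∀ f : F → ℂ, ∑ w : F, f (c * w) = ∑ w : F, f w := by
    intro f
    exact Fintype.sum_equiv (Equiv.mulLeft₀ c hc) _ _ (fun w => rfl)
  rw [key (fun w => ee s (Algebra.trace (ZMod s) F w))]
  obtain ⟨t, ht⟩ := exists_trace_one s F
  have shift : ∑ w : F, ee s (Algebra.trace (ZMod s) F w)
      = ∑ w : F, ee s (Algebra.trace (ZMod s) F (w + t)) := by
    exact (Fintype.sum_equiv (Equiv.addRight t) _ _ (fun w => rfl)).symm
  have expand : ∀ w : F, ee s (Algebra.trace (ZMod s) F (w + t))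
      = ee s (Algebra.trace (ZMod s) F w) * zeta s := by
    intro w
    rw [map_add, ht, ee_add]
    congr 1
    haveI : NeZero s := ⟨s_ne_zero s⟩
    have h1 : 1 < s := (Fact.out (p := Nat.Prime s)).one_lt
    rw [ee, ZMod.val_one, pow_one]
  rw [Finset.sum_congr rfl (fun w _ => expand w), ← Finset.sum_mul] at shift
  have hz := zeta_ne_one s (Fact.out (p := Nat.Prime s)).one_lt
  have : ∑ w : F, ee s (Algebra.trace (ZMod s) F w) = 0 := by
    by_contra hS
    field_simp at shift
    exact hz shift.symm
  exact this

lemma sum_char_single (c : F) :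
    ∑ w : F, ee s (Algebra.trace (ZMod s) F (c * w)) =
      if c = 0 then (Fintype.card F : ℂ) else 0 := by
  by_cases hc : c = 0
  · simp [hc, ee_zero]
  · simp [hc, sum_char_zero_ne s F c hc]

end CharSum

section TSec
variable (s : ℕ) [Fact (Nat.Prime s)] (F : Type) [Field F] [Fintype F] [Algebra (ZMod s) F] (m : ℕ)

noncomputable def T (x z : Fin m → F) : ZMod s := ∑ i, Algebra.trace (ZMod s) F (x i * z i)

lemma pairTr_eq (x z : Fin m → F) : pairTr s F m x z = (T s F m x z).val := rfl

lemma T_comm (x z : Fin m → F) : T s F m x z = T s F m z x := by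
  unfold T; simp [mul_comm]

lemma T_sub_left (a b z : Fin m → F) : T s F m (a - b) z = T s F m a z - T s F m b z := by
  unfold T
  rw [← Finset.sum_sub_distrib]
  congr 1; funext i
  rw [← map_sub]
  congr 1
  simp [Pi.sub_apply, sub_mul]

lemma T_sub_right (x a b : Fin m → F) : T s F m x (a - b) = T s F m x a - T s F m x b := by
  rw [T_comm, T_sub_left, T_comm s F m a x, T_comm s F m b x]

lemma sum_char (c : Fin m → F) :
    ∑ z : Fin m → F, ee s (T s F m c z) = if c = 0 then ((Fintype.card F : ℂ)) ^ m else 0 := by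
  have h1 : ∀ z : Fin m → F, ee s (T s F m c z)
      = ∏ i, ee s (Algebra.trace (ZMod s) F (c i * z i)) := fun z => ee_sum s _ _
  rw [Finset.sum_congr rfl (fun z _ => h1 z), ← Fintype.prod_sum (fun (i : Fin m) (w : F) => ee s (Algebra.trace (ZMod s) F (c i * w)))]
  by_cases hc : c = 0
  · subst hc
    simp [ee_zero]
  · have : ∃ i, c i ≠ 0 := by
      by_contra h
      push_neg at h
      exact hc (funext h)
    obtain ⟨i, hi⟩ := this
    rw [if_neg hc]
    apply Finset.prod_eq_zero (Finset.mem_univ i)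
    exact sum_char_zero_ne s F (c i) hi

end TSec

section VecSec
variable (s : ℕ) [Fact (Nat.Prime s)] (F : Type) [Field F] [Fintype F] [Algebra (ZMod s) F] (m : ℕ)

noncomputable def dvec : ((Fin m → F) × (Fin m → F)) → ℂ :=
  fun p => if p.1 = p.2 then 1 else 0

lemma star_dvec : star (dvec F m) = dvec F m := by
  funext p
  simp [dvec, Pi.star_apply, apply_ite]

lemma card_pow_ne_zero : ((Fintype.card F : ℂ)) ^ m ≠ 0 :=
  pow_ne_zero _ (Nat.cast_ne_zero.mpr Fintype.card_ne_zero)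

lemma phase_eq (z : Fin m → F) (p : (Fin m → F) × (Fin m → F)) :
    phasePairVec s F m z p =
      (1 / ((Fintype.card F : ℂ)) ^ m) * ee s (T s F m p.2 z - T s F m p.1 z) := by
  rw [phasePairVec, pairTr_eq, pairTr_eq, exp_neg_val, exp_val, mul_assoc, ← ee_add]
  congr 1
  ring_nf

lemma conj_phase (z : Fin m → F) (p : (Fin m → F) × (Fin m → F)) :
    (starRingEnd ℂ) (phasePairVec s F m z p) =
      (1 / ((Fintype.card F : ℂ)) ^ m) * ee s (T s F m p.1 z - T s F m p.2 z) := by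
  rw [phase_eq, map_mul, conj_ee, neg_sub]
  congr 1
  simp

lemma sum_bit : ∑ x : Fin m → F, bitPairVec F m x = dvec F m := by
  funext p
  rw [Finset.sum_apply]
  by_cases h : p.1 = p.2
  · rw [show dvec F m p = 1 by simp [dvec, h]]
    rw [Finset.sum_eq_single p.1]
    · simp [bitPairVec, Prod.ext_iff, h.symm]
    · intro x _ hx
      simp only [bitPairVec, ite_eq_right_iff]
      intro hp
      exact (hx (by rw [hp])).elim
    · simp
  · rw [show dvec F m p = 0 by simp [dvec, h]]
    apply Finset.sum_eq_zero
    intro x _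
    simp only [bitPairVec, ite_eq_right_iff]
    intro hp
    exact (h (by rw [hp])).elim

lemma sum_phase : ∑ z : Fin m → F, phasePairVec s F m z = dvec F m := by
  funext p
  rw [Finset.sum_apply]
  have h1 : ∀ z : Fin m → F, phasePairVec s F m z p
      = (1 / ((Fintype.card F : ℂ)) ^ m) * ee s (T s F m (p.2 - p.1) z) := by
    intro z
    rw [phase_eq, T_sub_left]
  rw [Finset.sum_congr rfl (fun z _ => h1 z), ← Finset.mul_sum, sum_char]
  by_cases h : p.1 = p.2
  · rw [if_pos (by simp [h]), dvec, if_pos h, one_div,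
      inv_mul_cancel₀ (card_pow_ne_zero F m)]
  · rw [if_neg (by simp [sub_eq_zero]; exact fun hh => h hh.symm), dvec, if_neg h, mul_zero]

lemma star_bit (x : Fin m → F) : star (bitPairVec F m x) = bitPairVec F m x := by
  funext p
  simp [bitPairVec, Pi.star_apply, apply_ite]

lemma dot_bit_collapse (x : Fin m → F) (v : ((Fin m → F) × (Fin m → F)) → ℂ) :
    star (bitPairVec F m x) ⬝ᵥ v = v (x, x) := by
  rw [star_bit]
  simp only [dotProduct, bitPairVec, ite_mul, one_mul, zero_mul]
  rw [Finset.sum_ite_eq']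
  simp

lemma dot_collapse_bit (x : Fin m → F) (v : ((Fin m → F) × (Fin m → F)) → ℂ) :
    star v ⬝ᵥ bitPairVec F m x = (starRingEnd ℂ) (v (x, x)) := by
  simp only [dotProduct, bitPairVec, mul_ite, mul_one, mul_zero]
  rw [Finset.sum_ite_eq']
  simp [RCLike.star_def]

lemma bit_ortho (x y : Fin m → F) :
    star (bitPairVec F m x) ⬝ᵥ bitPairVec F m y = if x = y then 1 else 0 := by
  rw [dot_bit_collapse, bitPairVec]
  by_cases h : x = y
  · simp [h]
  · have : ¬ ((x, x) = (y, y)) := by simp [Prod.ext_iff, h]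
    simp [this, h]

lemma bit_phase (x z : Fin m → F) :
    star (bitPairVec F m x) ⬝ᵥ phasePairVec s F m z = 1 / ((Fintype.card F : ℂ)) ^ m := by
  rw [dot_bit_collapse, phase_eq]
  simp [ee_zero]

lemma phase_bit (x z : Fin m → F) :
    star (phasePairVec s F m z) ⬝ᵥ bitPairVec F m x = 1 / ((Fintype.card F : ℂ)) ^ m := by
  rw [dot_collapse_bit, phase_eq]
  simp [ee_zero]

lemma phase_ortho (z w : Fin m → F) :
    star (phasePairVec s F m z) ⬝ᵥ phasePairVec s F m w = if z = w then 1 else 0 := by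
  have hterm : ∀ p : (Fin m → F) × (Fin m → F),
      star (phasePairVec s F m z) p * phasePairVec s F m w p
        = (1 / ((Fintype.card F : ℂ)) ^ m) ^ 2 * ee s (T s F m (p.1 - p.2) (z - w)) := by
    intro p
    rw [Pi.star_apply, RCLike.star_def, conj_phase, phase_eq]
    have : T s F m (p.1 - p.2) (z - w)
        = (T s F m p.1 z - T s F m p.2 z) + (T s F m p.2 w - T s F m p.1 w) := by
      rw [T_sub_right, T_sub_left, T_sub_left]
      ring
    rw [this, ee_add]
    ring
  rw [dotProduct, Finset.sum_congr rfl (fun p _ => hterm p), ← Finset.mul_sum]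
  have hsum : ∑ p : (Fin m → F) × (Fin m → F), ee s (T s F m (p.1 - p.2) (z - w))
      = (Fintype.card F : ℂ) ^ m * (if z - w = 0 then ((Fintype.card F : ℂ)) ^ m else 0) := by
    rw [Fintype.sum_prod_type]
    have inner : ∀ a : Fin m → F, ∑ b : Fin m → F, ee s (T s F m (a - b) (z - w))
        = if z - w = 0 then ((Fintype.card F : ℂ)) ^ m else 0 := by
      intro a
      have he := Equiv.sum_comp (Equiv.subLeft a) (fun c => ee s (T s F m c (z - w)))
      simp only [Equiv.subLeft_apply] at he
      rw [he, Finset.sum_congr rfl (fun c _ => by rw [T_comm]), sum_char]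
    rw [Finset.sum_congr rfl (fun a _ => inner a), Finset.sum_const]
    simp [Finset.card_univ, mul_comm]
  rw [hsum]
  by_cases h : z = w
  · rw [if_pos (by simp [h]), if_pos h]
    field_simp
  · rw [if_neg (by simp [sub_eq_zero, h]), if_neg h, mul_zero, mul_zero]

section MatrixAux
variable {n : Type*} [Fintype n] {ι : Type*}

lemma mul_vecMulVec (A : Matrix n n ℂ) (v u : n → ℂ) :
    A * Matrix.vecMulVec v u = Matrix.vecMulVec (A *ᵥ v) u := by
  ext p q
  simp only [Matrix.mul_apply, Matrix.vecMulVec_apply, Matrix.mulVec, dotProduct,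
    Finset.sum_mul]
  exact Finset.sum_congr rfl fun r _ => by ring

lemma vecMulVec_mul (v u : n → ℂ) (B : Matrix n n ℂ) :
    Matrix.vecMulVec v u * B = Matrix.vecMulVec v (u ᵥ* B) := by
  ext p q
  simp only [Matrix.mul_apply, Matrix.vecMulVec_apply, Matrix.vecMul, dotProduct,
    Finset.mul_sum]
  exact Finset.sum_congr rfl fun r _ => by ring

lemma vecMulVec_mul_vecMulVec (a b c d : n → ℂ) :
    Matrix.vecMulVec a b * Matrix.vecMulVec c d = (b ⬝ᵥ c) • Matrix.vecMulVec a d := by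
  ext p q
  simp only [Matrix.mul_apply, Matrix.vecMulVec_apply, Matrix.smul_apply, dotProduct,
    smul_eq_mul, Finset.sum_mul, Finset.mul_sum]
  exact Finset.sum_congr rfl fun r _ => by ring

lemma trace_mul_vecMulVec (M : Matrix n n ℂ) (v u : n → ℂ) :
    (M * Matrix.vecMulVec v u).trace = u ⬝ᵥ (M *ᵥ v) := by
  simp only [Matrix.trace, Matrix.diag, Matrix.mul_apply, Matrix.vecMulVec_apply,
    dotProduct, Matrix.mulVec, Finset.mul_sum]
  exact Finset.sum_congr rfl fun r _ => Finset.sum_congr rfl fun p _ => by ring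

lemma trace_vecMulVec_mul (M : Matrix n n ℂ) (v u : n → ℂ) :
    (Matrix.vecMulVec v u * M).trace = u ⬝ᵥ (M *ᵥ v) := by
  rw [Matrix.trace_mul_comm, trace_mul_vecMulVec]

lemma vecMulVec_sum_left (t : Finset ι) (f : ι → n → ℂ) (u : n → ℂ) :
    ∑ i ∈ t, Matrix.vecMulVec (f i) u = Matrix.vecMulVec (∑ i ∈ t, f i) u := by
  ext p q
  simp [Matrix.vecMulVec_apply, Finset.sum_mul, Matrix.sum_apply]

lemma vecMulVec_sum_right (t : Finset ι) (v : n → ℂ) (f : ι → n → ℂ) :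
    ∑ i ∈ t, Matrix.vecMulVec v (f i) = Matrix.vecMulVec v (∑ i ∈ t, f i) := by
  ext p q
  simp [Matrix.vecMulVec_apply, Finset.mul_sum, Matrix.sum_apply]

lemma conjTranspose_vecMulVec_star (v : n → ℂ) :
    (Matrix.vecMulVec v (star v))ᴴ = Matrix.vecMulVec v (star v) := by
  ext p q
  simp only [Matrix.conjTranspose_apply, Matrix.vecMulVec_apply, Pi.star_apply, star_mul',
    star_star]
  ring

lemma sum_mulVec' (t : Finset ι) (f : ι → Matrix n n ℂ) (u : n → ℂ) :
    (∑ i ∈ t, f i) *ᵥ u = ∑ i ∈ t, (f i *ᵥ u) := by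
  funext p
  simp [Matrix.mulVec, dotProduct, Matrix.sum_apply, Finset.sum_mul, Finset.sum_apply]
  rw [Finset.sum_comm]

lemma dot_sum (t : Finset ι) (v : n → ℂ) (f : ι → n → ℂ) :
    v ⬝ᵥ (∑ i ∈ t, f i) = ∑ i ∈ t, v ⬝ᵥ f i := by
  simp [dotProduct, Finset.mul_sum, Finset.sum_apply]
  rw [Finset.sum_comm]

lemma re_dot_star_self_nonneg (v : n → ℂ) : 0 ≤ (star v ⬝ᵥ v).re := by
  rw [dotProduct, Complex.re_sum]
  apply Finset.sum_nonneg
  intro i _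
  rw [Pi.star_apply, RCLike.star_def, mul_comm, Complex.mul_conj]
  simp [Complex.normSq_nonneg]

end MatrixAux

section KronAux
variable {n : Type*} [Fintype n] [DecidableEq n] {κ : Type*} [Fintype κ]

lemma kron_conjTranspose (A B : Matrix n n ℂ) : (A ⊗ₖ B)ᴴ = Aᴴ ⊗ₖ Bᴴ := by
  ext p q
  simp [Matrix.conjTranspose_apply, Matrix.kroneckerMap_apply, star_mul']

lemma sum_kron_one (f : κ → Matrix n n ℂ) :
    ∑ k, (f k ⊗ₖ (1 : Matrix n n ℂ)) = (∑ k, f k) ⊗ₖ (1 : Matrix n n ℂ) := by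
  ext p q
  simp [Matrix.kroneckerMap_apply, Matrix.sum_apply, Finset.sum_mul]

end KronAux

section PSec
variable (s : ℕ) [Fact (Nat.Prime s)] (F : Type) [Field F] [Fintype F] [Algebra (ZMod s) F] (m : ℕ)

lemma star_maxEnt : star (maxEnt F m) = maxEnt F m := by
  funext p
  simp [maxEnt, Pi.star_apply, apply_ite (star : ℂ → ℂ), Complex.star_def, Complex.conj_ofReal]

lemma maxEnt_smul :
    maxEnt F m = ((1 / Real.sqrt ((Fintype.card F : ℝ) ^ m) : ℝ) : ℂ) • dvec F m := by
  funext p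
  simp [maxEnt, dvec, Pi.smul_apply, smul_eq_mul, mul_ite, mul_one, mul_zero]

lemma maxEnt_coef_sq :
    (((1 / Real.sqrt ((Fintype.card F : ℝ) ^ m) : ℝ) : ℂ)) *
      (((1 / Real.sqrt ((Fintype.card F : ℝ) ^ m) : ℝ) : ℂ)) =
      1 / ((Fintype.card F : ℂ)) ^ m := by
  have hx : (0 : ℝ) ≤ (Fintype.card F : ℝ) ^ m := by positivity
  have h : (1 / Real.sqrt ((Fintype.card F : ℝ) ^ m) : ℝ) *
      (1 / Real.sqrt ((Fintype.card F : ℝ) ^ m) : ℝ) = 1 / ((Fintype.card F : ℝ) ^ m) := by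
    rw [div_mul_div_comm, one_mul, Real.mul_self_sqrt hx]
  calc (((1 / Real.sqrt ((Fintype.card F : ℝ) ^ m) : ℝ) : ℂ)) *
      (((1 / Real.sqrt ((Fintype.card F : ℝ) ^ m) : ℝ) : ℂ))
      = (((1 / Real.sqrt ((Fintype.card F : ℝ) ^ m) : ℝ) *
          (1 / Real.sqrt ((Fintype.card F : ℝ) ^ m) : ℝ) : ℝ) : ℂ) := by push_cast; ring
    _ = 1 / ((Fintype.card F : ℂ)) ^ m := by rw [h]; push_cast; ring

lemma vecMulVec_maxEnt :
    Matrix.vecMulVec (maxEnt F m) (star (maxEnt F m)) =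
      (1 / ((Fintype.card F : ℂ)) ^ m) • Matrix.vecMulVec (dvec F m) (dvec F m) := by
  rw [star_maxEnt, maxEnt_smul]
  ext p q
  simp only [Matrix.vecMulVec_apply, Matrix.smul_apply, Pi.smul_apply, smul_eq_mul]
  rw [← maxEnt_coef_sq F m]
  ring

lemma P1_herm : (P₁ F m)ᴴ = P₁ F m := by
  rw [P₁, Matrix.conjTranspose_sum]
  exact Finset.sum_congr rfl fun x _ => conjTranspose_vecMulVec_star _

lemma P2_herm : (P₂ s F m)ᴴ = P₂ s F m := by
  rw [P₂, Matrix.conjTranspose_sum]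
  exact Finset.sum_congr rfl fun z _ => conjTranspose_vecMulVec_star _

lemma P1_mul_P2 : P₁ F m * P₂ s F m = Matrix.vecMulVec (maxEnt F m) (star (maxEnt F m)) := by
  rw [P₁, P₂, Finset.sum_mul_sum, vecMulVec_maxEnt]
  have h1 : ∀ x z : Fin m → F,
      Matrix.vecMulVec (bitPairVec F m x) (star (bitPairVec F m x)) *
        Matrix.vecMulVec (phasePairVec s F m z) (star (phasePairVec s F m z))
      = (1 / ((Fintype.card F : ℂ)) ^ m) •
          Matrix.vecMulVec (bitPairVec F m x) (star (phasePairVec s F m z)) := by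
    intro x z
    rw [vecMulVec_mul_vecMulVec, bit_phase]
  calc (∑ x : Fin m → F, ∑ z : Fin m → F,
        Matrix.vecMulVec (bitPairVec F m x) (star (bitPairVec F m x)) *
          Matrix.vecMulVec (phasePairVec s F m z) (star (phasePairVec s F m z)))
      = ∑ x : Fin m → F, ∑ z : Fin m → F, (1 / ((Fintype.card F : ℂ)) ^ m) •
          Matrix.vecMulVec (bitPairVec F m x) (star (phasePairVec s F m z)) := by
        exact Finset.sum_congr rfl fun x _ => Finset.sum_congr rfl fun z _ => h1 x z
    _ = (1 / ((Fintype.card F : ℂ)) ^ m) • ∑ x : Fin m → F,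
          Matrix.vecMulVec (bitPairVec F m x) (star (∑ z : Fin m → F, phasePairVec s F m z)) := by
        rw [Finset.smul_sum]
        refine Finset.sum_congr rfl fun x _ => ?_
        rw [← Finset.smul_sum, star_sum, vecMulVec_sum_right]
    _ = (1 / ((Fintype.card F : ℂ)) ^ m) • Matrix.vecMulVec (dvec F m) (dvec F m) := by
        rw [sum_phase, star_dvec, vecMulVec_sum_left, sum_bit]

lemma P2_mul_P1 : P₂ s F m * P₁ F m = Matrix.vecMulVec (maxEnt F m) (star (maxEnt F m)) := by
  rw [P₁, P₂, Finset.sum_mul_sum, vecMulVec_maxEnt]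
  have h1 : ∀ z x : Fin m → F,
      Matrix.vecMulVec (phasePairVec s F m z) (star (phasePairVec s F m z)) *
        Matrix.vecMulVec (bitPairVec F m x) (star (bitPairVec F m x))
      = (1 / ((Fintype.card F : ℂ)) ^ m) •
          Matrix.vecMulVec (phasePairVec s F m z) (star (bitPairVec F m x)) := by
    intro z x
    rw [vecMulVec_mul_vecMulVec, phase_bit]
  calc (∑ z : Fin m → F, ∑ x : Fin m → F,
        Matrix.vecMulVec (phasePairVec s F m z) (star (phasePairVec s F m z)) *
          Matrix.vecMulVec (bitPairVec F m x) (star (bitPairVec F m x)))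
      = ∑ z : Fin m → F, ∑ x : Fin m → F, (1 / ((Fintype.card F : ℂ)) ^ m) •
          Matrix.vecMulVec (phasePairVec s F m z) (star (bitPairVec F m x)) := by
        exact Finset.sum_congr rfl fun z _ => Finset.sum_congr rfl fun x _ => h1 z x
    _ = (1 / ((Fintype.card F : ℂ)) ^ m) • ∑ z : Fin m → F,
          Matrix.vecMulVec (phasePairVec s F m z) (star (∑ x : Fin m → F, bitPairVec F m x)) := by
        rw [Finset.smul_sum]
        refine Finset.sum_congr rfl fun z _ => ?_
        rw [← Finset.smul_sum, star_sum, vecMulVec_sum_right]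
    _ = (1 / ((Fintype.card F : ℂ)) ^ m) • Matrix.vecMulVec (dvec F m) (dvec F m) := by
        rw [sum_bit, star_dvec, vecMulVec_sum_left, sum_phase]

lemma P1_idem : P₁ F m * P₁ F m = P₁ F m := by
  rw [P₁, Finset.sum_mul_sum]
  have h1 : ∀ x y : Fin m → F,
      Matrix.vecMulVec (bitPairVec F m x) (star (bitPairVec F m x)) *
        Matrix.vecMulVec (bitPairVec F m y) (star (bitPairVec F m y))
      = (if x = y then (1:ℂ) else 0) •
          Matrix.vecMulVec (bitPairVec F m x) (star (bitPairVec F m y)) := by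
    intro x y
    rw [vecMulVec_mul_vecMulVec, bit_ortho]
  rw [Finset.sum_congr rfl fun x _ => Finset.sum_congr rfl fun y _ => h1 x y]
  refine Finset.sum_congr rfl fun x _ => ?_
  simp only [ite_smul, one_smul, zero_smul]
  rw [Finset.sum_ite_eq]
  simp

lemma P2_idem : P₂ s F m * P₂ s F m = P₂ s F m := by
  rw [P₂, Finset.sum_mul_sum]
  have h1 : ∀ z w : Fin m → F,
      Matrix.vecMulVec (phasePairVec s F m z) (star (phasePairVec s F m z)) *
        Matrix.vecMulVec (phasePairVec s F m w) (star (phasePairVec s F m w))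
      = (if z = w then (1:ℂ) else 0) •
          Matrix.vecMulVec (phasePairVec s F m z) (star (phasePairVec s F m w)) := by
    intro z w
    rw [vecMulVec_mul_vecMulVec, phase_ortho]
  rw [Finset.sum_congr rfl fun z _ => Finset.sum_congr rfl fun w _ => h1 z w]
  refine Finset.sum_congr rfl fun z _ => ?_
  simp only [ite_smul, one_smul, zero_smul]
  rw [Finset.sum_ite_eq]
  simp

lemma maxEnt_norm : star (maxEnt F m) ⬝ᵥ maxEnt F m = 1 := by
  rw [star_maxEnt, maxEnt_smul]
  simp only [dotProduct, Pi.smul_apply, smul_eq_mul]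
  have : ∀ p : (Fin m → F) × (Fin m → F),
      (((1 / Real.sqrt ((Fintype.card F : ℝ) ^ m) : ℝ) : ℂ)) * dvec F m p *
        ((((1 / Real.sqrt ((Fintype.card F : ℝ) ^ m) : ℝ) : ℂ)) * dvec F m p)
      = (1 / ((Fintype.card F : ℂ)) ^ m) * dvec F m p := by
    intro p
    rw [show (((1 / Real.sqrt ((Fintype.card F : ℝ) ^ m) : ℝ) : ℂ)) * dvec F m p *
        ((((1 / Real.sqrt ((Fintype.card F : ℝ) ^ m) : ℝ) : ℂ)) * dvec F m p)
      = ((((1 / Real.sqrt ((Fintype.card F : ℝ) ^ m) : ℝ) : ℂ)) *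
        (((1 / Real.sqrt ((Fintype.card F : ℝ) ^ m) : ℝ) : ℂ))) * (dvec F m p * dvec F m p)
      from by ring, maxEnt_coef_sq]
    congr 1
    by_cases h : p.1 = p.2 <;> simp [dvec, h]
  rw [Finset.sum_congr rfl fun p _ => this p, ← Finset.mul_sum]
  have hsum : ∑ p : (Fin m → F) × (Fin m → F), dvec F m p = ((Fintype.card F : ℂ)) ^ m := by
    rw [Fintype.sum_prod_type]
    have : ∀ a : Fin m → F, ∑ b : Fin m → F, dvec F m (a, b) = 1 := by
      intro a
      rw [show (fun b => dvec F m (a, b)) = fun b => if a = b then (1:ℂ) else 0 from rfl]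
      simp [Finset.sum_ite_eq]
    rw [Finset.sum_congr rfl fun a _ => this a]
    simp [Finset.card_univ]
  rw [hsum]
  field_simp

end PSec

/-- for a quantum channel `Λ` on `H_code` given by Kraus operators `K_k`
(`Σ_k K_k† K_k = 1`), with `σ := (Λ ⊗ ι_R)(|Φ⟩⟨Φ|) = Σ_k (K_k ⊗ 1)|Φ⟩⟨Φ|(K_k ⊗ 1)†`,
one has `1 − ⟨Φ|σ|Φ⟩ ≤ Tr[σ(I − P₁)] + Tr[σ(I − P₂)]`. -/
theorem stmt9 (s : ℕ) [Fact (Nat.Prime s)] (F : Type) [Field F] [Fintype F]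
    [Algebra (ZMod s) F] (hcard : ∃ t : ℕ, 0 < t ∧ Fintype.card F = s ^ t) (m : ℕ)
    (κ : Type) [Fintype κ] (K : κ → Matrix (Fin m → F) (Fin m → F) ℂ)
    (hK : ∑ k, (K k)ᴴ * K k = 1) :
    let σ := ∑ k, (K k ⊗ₖ (1 : Matrix (Fin m → F) (Fin m → F) ℂ)) *
        Matrix.vecMulVec (maxEnt F m) (star (maxEnt F m)) *
        (K k ⊗ₖ (1 : Matrix (Fin m → F) (Fin m → F) ℂ))ᴴ
    (1 - star (maxEnt F m) ⬝ᵥ (σ *ᵥ maxEnt F m)).re ≤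
      ((σ * (1 - P₁ F m)).trace).re + ((σ * (1 - P₂ s F m)).trace).re := by
  intro σ
  set Φ : ((Fin m → F) × (Fin m → F)) → ℂ := maxEnt F m with hΦ
  set Φ' : Matrix ((Fin m → F) × (Fin m → F)) ((Fin m → F) × (Fin m → F)) ℂ :=
    Matrix.vecMulVec (maxEnt F m) (star (maxEnt F m)) with hΦ'
  set A : κ → Matrix ((Fin m → F) × (Fin m → F)) ((Fin m → F) × (Fin m → F)) ℂ :=
    fun k => (K k ⊗ₖ (1 : Matrix (Fin m → F) (Fin m → F) ℂ)) with hA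
  set w : κ → ((Fin m → F) × (Fin m → F)) → ℂ := fun k => A k *ᵥ Φ with hw
  have hσ0 : σ = ∑ k, A k * Φ' * (A k)ᴴ := rfl
  have hterm : ∀ k, A k * Φ' * (A k)ᴴ = Matrix.vecMulVec (w k) (star (w k)) := by
    intro k
    rw [hΦ', mul_vecMulVec, vecMulVec_mul, ← Matrix.star_mulVec]
  have hσ : σ = ∑ k, Matrix.vecMulVec (w k) (star (w k)) := by
    rw [hσ0]
    exact Finset.sum_congr rfl fun k _ => hterm k
  -- trace of sigma is 1
  have hAA : ∑ k, (A k)ᴴ * A k = 1 := by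
    have h1 : ∀ k, (A k)ᴴ * A k = ((K k)ᴴ * K k) ⊗ₖ (1 : Matrix (Fin m → F) (Fin m → F) ℂ) := by
      intro k
      simp only [hA]
      rw [kron_conjTranspose, Matrix.conjTranspose_one, ← Matrix.mul_kronecker_mul,
        Matrix.one_mul]
    rw [Finset.sum_congr rfl fun k _ => h1 k, sum_kron_one, hK, Matrix.one_kronecker_one]
  have htr : σ.trace = 1 := by
    rw [hσ, Matrix.trace_sum]
    have h2 : ∀ k, (Matrix.vecMulVec (w k) (star (w k))).trace
        = star Φ ⬝ᵥ (((A k)ᴴ * A k) *ᵥ Φ) := by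
      intro k
      rw [← Matrix.one_mul (Matrix.vecMulVec (w k) (star (w k))), trace_mul_vecMulVec,
        Matrix.one_mulVec, hw]
      rw [Matrix.star_mulVec, ← Matrix.dotProduct_mulVec, Matrix.mulVec_mulVec]
    rw [Finset.sum_congr rfl fun k _ => h2 k]
    have h3 : ∑ k, star Φ ⬝ᵥ (((A k)ᴴ * A k) *ᵥ Φ)
        = star Φ ⬝ᵥ ((∑ k, (A k)ᴴ * A k) *ᵥ Φ) := by
      rw [sum_mulVec', dot_sum]
    rw [h3, hAA, Matrix.one_mulVec]
    exact maxEnt_norm F m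
  have hent : (σ * Φ').trace = star Φ ⬝ᵥ (σ *ᵥ Φ) := trace_mul_vecMulVec σ Φ (star Φ)
  -- key algebra
  set R : Matrix ((Fin m → F) × (Fin m → F)) ((Fin m → F) × (Fin m → F)) ℂ :=
    (1 - P₁ F m) * (1 - P₂ s F m) with hR
  have e : ∀ X Y : Matrix ((Fin m → F) × (Fin m → F)) ((Fin m → F) × (Fin m → F)) ℂ,
      (1 - X) * (1 - Y) = 1 - X - Y + X * Y := by intros; noncomm_ring
  have hkey : (σ * (1 - P₁ F m)).trace + (σ * (1 - P₂ s F m)).trace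
      = (σ * (1 - Φ')).trace + (σ * R).trace := by
    rw [← Matrix.trace_add, ← Matrix.trace_add, ← Matrix.mul_add, ← Matrix.mul_add]
    have : (1 - P₁ F m) + (1 - P₂ s F m) = (1 - Φ') + R := by
      rw [hR, e, hΦ', ← P1_mul_P2 s F m]
      abel
    rw [this]
  have hone : (σ * (1 - Φ')).trace = 1 - star Φ ⬝ᵥ (σ *ᵥ Φ) := by
    rw [Matrix.mul_sub, Matrix.mul_one, Matrix.trace_sub, htr, hent]
  -- positivity of trace(σ R)
  have hcomm : (1 - P₂ s F m) * (1 - P₁ F m) = (1 - P₁ F m) * (1 - P₂ s F m) := by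
    rw [e, e, P1_mul_P2, P2_mul_P1]
    abel
  have hq1 : (1 - P₁ F m) * (1 - P₁ F m) = 1 - P₁ F m := by
    rw [e, P1_idem]
    abel
  have hq2 : (1 - P₂ s F m) * (1 - P₂ s F m) = 1 - P₂ s F m := by
    rw [e, P2_idem]
    abel
  have hRH : Rᴴ = R := by
    have h1 : (1 - P₁ F m)ᴴ = 1 - P₁ F m := by
      rw [Matrix.conjTranspose_sub, Matrix.conjTranspose_one, P1_herm]
    have h2 : (1 - P₂ s F m)ᴴ = 1 - P₂ s F m := by
      rw [Matrix.conjTranspose_sub, Matrix.conjTranspose_one, P2_herm]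
    rw [hR, Matrix.conjTranspose_mul, h1, h2, hcomm]
  have hRR : R * R = R := by
    calc R * R = (1 - P₁ F m) * ((1 - P₂ s F m) * (1 - P₁ F m)) * (1 - P₂ s F m) := by
          rw [hR]; noncomm_ring
    _ = (1 - P₁ F m) * ((1 - P₁ F m) * (1 - P₂ s F m)) * (1 - P₂ s F m) := by rw [hcomm]
    _ = ((1 - P₁ F m) * (1 - P₁ F m)) * ((1 - P₂ s F m) * (1 - P₂ s F m)) := by noncomm_ring
    _ = R := by rw [hq1, hq2, hR]
  have hpos : 0 ≤ ((σ * R).trace).re := by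
    rw [hσ, Finset.sum_mul, Matrix.trace_sum]
    have h4 : ∀ k, (Matrix.vecMulVec (w k) (star (w k)) * R).trace
        = star (R *ᵥ w k) ⬝ᵥ (R *ᵥ w k) := by
      intro k
      have hstep : star (R *ᵥ w k) ⬝ᵥ (R *ᵥ w k) = star (w k) ⬝ᵥ (R *ᵥ w k) := by
        rw [Matrix.star_mulVec, ← Matrix.dotProduct_mulVec, Matrix.mulVec_mulVec, hRH, hRR]
      rw [trace_vecMulVec_mul]
      exact hstep.symm
    rw [Finset.sum_congr rfl fun k _ => h4 k, Complex.re_sum]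
    exact Finset.sum_nonneg fun k _ => re_dot_star_self_nonneg _
  have hfin : ((σ * (1 - P₁ F m)).trace).re + ((σ * (1 - P₂ s F m)).trace).re
      = (1 - star Φ ⬝ᵥ (σ *ᵥ Φ)).re + ((σ * R).trace).re := by
    rw [← Complex.add_re, hkey, hone, Complex.add_re]
  rw [hfin]
  linarith
end VecSec
end

section
/- Fix positive integers m₀ > 2m₁ and n' > 3m₀, and let q' be a prime power. Let S₁,…,S_{4m₀} be i.i.d. uniform on F_{q'}, define Vandermonde-type matrices Q₁ ∈ F_{q'}^{(n'−2m₀)×m₀}, Q₃, Q₄ ∈ F_{q'}^{m₀×m₀} by Q₁;i,j = (S_j)^i, Q₃;i,j = (S_{2m₀+j})^i, Q₄;i,j = (S_{3m₀+j})^i, and let R₁ be the block lower-triangular product matrix defined in the protocol with these blocks. Then for every fixed nonzero row vector x = (x^A, x^B, x^C) ∈ F_{q'}^{m₀} × F_{q'}^{m₀} × F_{q'}^{n'−2m₀}, the probability that x^A − x^B(Q₃^⊤ + Q₄) − x^C Q₁ = 0 is at most ((n'−2m₀)/q')^{m₀}. -/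
open scoped BigOperators Matrix

open Polynomial in
lemma aux_poly {F : Type} [Field F] {d : ℕ} (c : F) (v : Fin d → F) :
    ((C c - ∑ i : Fin d, C (v i) * X ^ ((i : ℕ) + 1)).natDegree ≤ d) ∧
    (∀ t : F, (C c - ∑ i : Fin d, C (v i) * X ^ ((i : ℕ) + 1)).eval t
        = c - ∑ i : Fin d, v i * t ^ ((i : ℕ) + 1)) ∧
    (v ≠ 0 → C c - ∑ i : Fin d, C (v i) * X ^ ((i : ℕ) + 1) ≠ 0) := by
  refine ⟨?_, ?_, ?_⟩
  · apply le_trans (natDegree_sub_le _ _)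
    simp only [natDegree_C, max_le_iff]
    refine ⟨Nat.zero_le _, ?_⟩
    apply le_trans (natDegree_sum_le _ _)
    apply Finset.sup_le
    intro i _
    apply le_trans natDegree_mul_le
    simp only [natDegree_C, natDegree_X_pow, zero_add, Function.comp]
    omega
  · intro t
    simp [eval_finset_sum]
  · intro hv hq
    obtain ⟨i₀, hi₀⟩ : ∃ i, v i ≠ 0 := by
      by_contra h; push_neg at h; exact hv (funext h)
    have := congrArg (fun p => Polynomial.coeff p ((i₀ : ℕ) + 1)) hq
    simp only [coeff_sub, coeff_C, Nat.add_eq_zero, coeff_zero, finset_sum_coeff,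
      coeff_C_mul, coeff_X_pow] at this
    rw [Finset.sum_eq_single i₀] at this
    · simp at this; exact hi₀ this
    · intro b _ hb
      have hne : ¬((i₀ : ℕ) + 1 = (b : ℕ) + 1) := fun h => hb (Fin.ext (by omega)).symm
      simp [hne]
      intro h; exact absurd (Fin.ext h) hb.symm
    · simp

lemma aux_count {F : Type} [Field F] [Fintype F] [DecidableEq F] {m k D : ℕ}
    (p : (Fin k → F) → Fin m → Polynomial F)
    (hp : ∀ b j, p b j ≠ 0) (hd : ∀ b j, (p b j).natDegree ≤ D) :
    Nat.card {ab : (Fin m → F) × (Fin k → F) // ∀ j, (p ab.2 j).eval (ab.1 j) = 0}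
      ≤ D ^ m * Fintype.card F ^ k := by
  classical
  have hroot : ∀ (b : Fin k → F) (j : Fin m),
      Fintype.card {t : F // (p b j).eval t = 0} ≤ D := by
    intro b j
    rw [Fintype.card_subtype]
    calc (Finset.univ.filter fun t => (p b j).eval t = 0).card
        ≤ (p b j).roots.toFinset.card := by
          apply Finset.card_le_card
          intro t ht
          simp only [Finset.mem_filter] at ht
          rw [Multiset.mem_toFinset, Polynomial.mem_roots (hp b j)]
          exact ht.2
      _ ≤ Multiset.card (p b j).roots := Multiset.toFinset_card_le _
      _ ≤ (p b j).natDegree := Polynomial.card_roots' _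
      _ ≤ D := hd b j
  have hinj : Function.Injective
      (fun (s : {ab : (Fin m → F) × (Fin k → F) // ∀ j, (p ab.2 j).eval (ab.1 j) = 0}) =>
        (⟨s.1.2, fun j => ⟨s.1.1 j, s.2 j⟩⟩ :
          Σ b : Fin k → F, ∀ j : Fin m, {t : F // (p b j).eval t = 0})) := by
    rintro ⟨⟨a₁, b₁⟩, h₁⟩ ⟨⟨a₂, b₂⟩, h₂⟩ h
    simp only [Sigma.mk.inj_iff] at h
    obtain ⟨rfl, h2⟩ := h
    have h2' := eq_of_heq h2
    ext
    · exact congrArg Subtype.val (congrFun h2' _)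
    · rfl
  calc Nat.card {ab : (Fin m → F) × (Fin k → F) // ∀ j, (p ab.2 j).eval (ab.1 j) = 0}
      ≤ Nat.card (Σ b : Fin k → F, ∀ j : Fin m, {t : F // (p b j).eval t = 0}) :=
        Nat.card_le_card_of_injective _ hinj
    _ = ∑ b : Fin k → F, ∏ j : Fin m, Fintype.card {t : F // (p b j).eval t = 0} := by
        rw [Nat.card_eq_fintype_card, Fintype.card_sigma]
        congr 1; ext b; rw [Fintype.card_pi]
    _ ≤ ∑ _b : Fin k → F, D ^ m := by
        apply Finset.sum_le_sum
        intro b _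
        calc ∏ j : Fin m, Fintype.card {t : F // (p b j).eval t = 0}
            ≤ ∏ _j : Fin m, D := Finset.prod_le_prod (fun _ _ => Nat.zero_le _)
              (fun j _ => hroot b j)
          _ = D ^ m := by simp
    _ = D ^ m * Fintype.card F ^ k := by
        simp [Finset.sum_const, mul_comm, Fintype.card_fun]

lemma aux_final (q D m : ℕ) (hq : 0 < q) (N : ℕ) (hN : N ≤ D ^ m * q ^ (3 * m)) :
    (N : ℝ) / (q : ℝ) ^ (4 * m) ≤ ((D : ℝ) / (q : ℝ)) ^ m := by
  have hq' : (0 : ℝ) < q := by exact_mod_cast hq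
  rw [div_pow, div_le_div_iff₀ (by positivity) (by positivity)]
  have h1 : (N : ℝ) ≤ (D : ℝ) ^ m * (q : ℝ) ^ (3 * m) := by exact_mod_cast hN
  calc (N : ℝ) * (q:ℝ) ^ m ≤ ((D:ℝ) ^ m * (q:ℝ) ^ (3 * m)) * (q:ℝ) ^ m :=
        mul_le_mul_of_nonneg_right h1 (by positivity)
    _ = (D:ℝ) ^ m * (q:ℝ) ^ (4 * m) := by
        rw [mul_assoc, ← pow_add, show 3 * m + m = 4 * m from by ring]

/-- with `m₀ > 2m₁` positive, `n' > 3m₀`, and `S₁,…,S_{4m₀}` i.i.d. uniform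
on `F_{q'}`, define the Vandermonde-type blocks `Q₁ ∈ F_{q'}^{(n'−2m₀)×m₀}`,
`Q₃, Q₄ ∈ F_{q'}^{m₀×m₀}` by `Q₁;i,j = (S_j)^i`, `Q₃;i,j = (S_{2m₀+j})^i`,
`Q₄;i,j = (S_{3m₀+j})^i`. For every fixed nonzero row vector
`x = (x^A, x^B, x^C)`, the probability that `x^A − x^B(Q₃ᵀ + Q₄) − x^C Q₁ = 0`
(i.e. that `x ((R₁ˢ)⁻¹)^A = 0`) is at most `((n'−2m₀)/q')^{m₀}`. -/
theorem stmt13 (F : Type) [Field F] [Fintype F] (m₀ m₁ n' : ℕ)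
    (hm₁ : 0 < m₁) (hm : 2 * m₁ < m₀) (hn : 3 * m₀ < n')
    (xA xB : Fin m₀ → F) (xC : Fin (n' - 2 * m₀) → F)
    (hx : ¬(xA = 0 ∧ xB = 0 ∧ xC = 0)) :
    (Nat.card {S : Fin (4 * m₀) → F //
        xA -
          Matrix.vecMul xB
            ((Matrix.of fun (i : Fin m₀) (j : Fin m₀) =>
                (S ⟨2 * m₀ + j.val, by have := j.isLt; omega⟩) ^ ((i : ℕ) + 1))ᵀ +
              Matrix.of fun (i : Fin m₀) (j : Fin m₀) =>
                (S ⟨3 * m₀ + j.val, by have := j.isLt; omega⟩) ^ ((i : ℕ) + 1)) -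
          Matrix.vecMul xC
            (Matrix.of fun (i : Fin (n' - 2 * m₀)) (j : Fin m₀) =>
              (S ⟨j.val, by have := j.isLt; omega⟩) ^ ((i : ℕ) + 1)) = 0} : ℝ) /
      (Fintype.card F : ℝ) ^ (4 * m₀) ≤
    (((n' - 2 * m₀ : ℕ) : ℝ) / (Fintype.card F : ℝ)) ^ m₀ := by
  classical
  have hq : 0 < Fintype.card F := Fintype.card_pos
  have hmD : m₀ ≤ n' - 2 * m₀ := by omega
  by_cases hC : xC = 0
  · by_cases hB : xB = 0
    · -- empty case
      have hA : xA ≠ 0 := fun h => hx ⟨h, hB, hC⟩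
      have hempty : IsEmpty {S : Fin (4 * m₀) → F //
          xA -
            Matrix.vecMul xB
              ((Matrix.of fun (i : Fin m₀) (j : Fin m₀) =>
                  (S ⟨2 * m₀ + j.val, by have := j.isLt; omega⟩) ^ ((i : ℕ) + 1))ᵀ +
                Matrix.of fun (i : Fin m₀) (j : Fin m₀) =>
                  (S ⟨3 * m₀ + j.val, by have := j.isLt; omega⟩) ^ ((i : ℕ) + 1)) -
            Matrix.vecMul xC
              (Matrix.of fun (i : Fin (n' - 2 * m₀)) (j : Fin m₀) =>
                (S ⟨j.val, by have := j.isLt; omega⟩) ^ ((i : ℕ) + 1)) = 0} := by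
        constructor
        rintro ⟨S, hS⟩
        rw [hB, hC] at hS
        simp only [Matrix.zero_vecMul, sub_zero] at hS
        exact hA hS
      rw [Nat.card_of_isEmpty]
      simp only [Nat.cast_zero, zero_div]
      positivity
    · -- case xB ≠ 0
      have hcount := aux_count (F := F) (m := m₀) (k := 3 * m₀) (D := n' - 2 * m₀)
        (fun (b : Fin (3 * m₀) → F) (j : Fin m₀) =>
          Polynomial.C (xA j
              - ∑ i : Fin m₀, xB i * (b ⟨2 * m₀ + i.val, by have := i.isLt; omega⟩) ^ ((j : ℕ) + 1)
              - ∑ i : Fin (n' - 2 * m₀), xC i * (b ⟨j.val, by have := j.isLt; omega⟩) ^ ((i : ℕ) + 1))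
            - ∑ i : Fin m₀, Polynomial.C (xB i) * Polynomial.X ^ ((i : ℕ) + 1))
        (fun b j => (aux_poly _ xB).2.2 hB)
        (fun b j => le_trans (aux_poly _ xB).1 hmD)
      beta_reduce at hcount
      apply aux_final _ _ _ hq
      refine le_trans ?_ hcount
      refine Nat.card_le_card_of_injective ?_ ?_
      case _ => exact fun s => ⟨(fun j => s.1 ⟨3 * m₀ + j.val, by have := j.isLt; omega⟩,
            fun i => s.1 ⟨i.val, by have := i.isLt; omega⟩), by
          intro j
          have h := congrFun s.2 j
          simp only [Pi.sub_apply, Matrix.vecMul, dotProduct, Matrix.add_apply,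
            Matrix.transpose_apply, Matrix.of_apply, Pi.zero_apply, mul_add,
            Finset.sum_add_distrib] at h
          rw [(aux_poly _ xB).2.1]
          linear_combination h⟩
      rintro ⟨S1, h1⟩ ⟨S2, h2⟩ h
      simp only [Subtype.mk.injEq, Prod.mk.injEq] at h
      apply Subtype.ext
      funext k
      by_cases hk : k.val < 3 * m₀
      · exact congrFun h.2 ⟨k.val, hk⟩
      · have hkk := congrFun h.1 ⟨k.val - 3 * m₀, by have := k.isLt; omega⟩
        convert hkk using 2 <;> exact Fin.ext (by simp; omega)
  · -- case xC ≠ 0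
    have hcount := aux_count (F := F) (m := m₀) (k := 3 * m₀) (D := n' - 2 * m₀)
      (fun (b : Fin (3 * m₀) → F) (j : Fin m₀) =>
        Polynomial.C (xA j
            - ∑ i : Fin m₀, xB i * (b ⟨m₀ + i.val, by have := i.isLt; omega⟩) ^ ((j : ℕ) + 1)
            - ∑ i : Fin m₀, xB i * (b ⟨2 * m₀ + j.val, by have := j.isLt; omega⟩) ^ ((i : ℕ) + 1))
          - ∑ i : Fin (n' - 2 * m₀), Polynomial.C (xC i) * Polynomial.X ^ ((i : ℕ) + 1))
      (fun b j => (aux_poly _ xC).2.2 hC)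
      (fun b j => (aux_poly _ xC).1)
    beta_reduce at hcount
    apply aux_final _ _ _ hq
    refine le_trans ?_ hcount
    refine Nat.card_le_card_of_injective ?_ ?_
    case _ => exact fun s => ⟨(fun j => s.1 ⟨j.val, by have := j.isLt; omega⟩,
          fun i => s.1 ⟨m₀ + i.val, by have := i.isLt; omega⟩), by
        intro j
        have h := congrFun s.2 j
        simp only [Pi.sub_apply, Matrix.vecMul, dotProduct, Matrix.add_apply,
          Matrix.transpose_apply, Matrix.of_apply, Pi.zero_apply, mul_add,
          Finset.sum_add_distrib] at h
        rw [(aux_poly _ xC).2.1]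
        simp only [show ∀ x : ℕ, m₀ + (m₀ + x) = 2 * m₀ + x from fun x => by omega,
          show m₀ + (2 * m₀ + (j : ℕ)) = 3 * m₀ + (j : ℕ) from by omega]
        linear_combination h⟩
    rintro ⟨S1, h1⟩ ⟨S2, h2⟩ h
    simp only [Subtype.mk.injEq, Prod.mk.injEq] at h
    apply Subtype.ext
    funext k
    by_cases hk : k.val < m₀
    · exact congrFun h.1 ⟨k.val, hk⟩
    · have hkk := congrFun h.2 ⟨k.val - m₀, by have := k.isLt; omega⟩
      convert hkk using 2 <;> exact Fin.ext (by simp; omega)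
end
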